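/- Upper bound for fractional power connectives: Fix β ∈ (0,1] and ε ∈ (0,1), and let H be a real inner product space. Suppose x_1,…,x_n and y_1,…,y_n are vectors in H with ‖x_i‖ ≤ 1 and ‖y_i‖ ≤ 1, such that (max(⟪x_i,y_j⟫,0))^β − (max(⟪x_j,y_i⟫,0))^β ≥ ε for all 1 ≤ i < j ≤ n. Then log n ≤ π·ε^(−1/β) + 1. -/

import Mathlib

set_option maxHeartbeats 1000000
section FracPowAux

open Real RealInnerProductSpace intervalIntegral Finset

lemma key_int (m : ℤ) :
    ∫ t in (0:ℝ)..(2*π), (π - t) * Real.sin (m * t) = if m = 0 then 0 else 2*π/m := by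
  rcases eq_or_ne m 0 with rfl | hm
  · simp
  · have hm' : (m:ℝ) ≠ 0 := Int.cast_ne_zero.2 hm
    have key : ∀ t : ℝ, HasDerivAt
        (fun t : ℝ => -((π - t) * Real.cos (m*t))/m - Real.sin (m*t)/(m:ℝ)^2)
        ((π - t) * Real.sin (m*t)) t := by
      intro t
      have h1 : HasDerivAt (fun t : ℝ => (m:ℝ)*t) (m:ℝ) t := by
        simpa using (hasDerivAt_id t).const_mul (m:ℝ)
      have hcos : HasDerivAt (fun t : ℝ => Real.cos ((m:ℝ)*t)) (-Real.sin ((m:ℝ)*t) * m) t :=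
        (Real.hasDerivAt_cos _).comp t h1
      have hsin : HasDerivAt (fun t : ℝ => Real.sin ((m:ℝ)*t)) (Real.cos ((m:ℝ)*t) * m) t :=
        (Real.hasDerivAt_sin _).comp t h1
      have hlin : HasDerivAt (fun t : ℝ => π - t) (-1) t := by
        simpa using (hasDerivAt_id t).const_sub π
      have := (((hlin.mul hcos).neg.div_const (m:ℝ)).sub (hsin.div_const ((m:ℝ)^2)))
      refine this.congr_deriv ?_
      field_simp
      ring
    rw [integral_eq_sub_of_hasDerivAt (fun t _ => key t)
      (Continuous.intervalIntegrable (by continuity) _ _)]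
    have c1 : Real.cos ((m:ℝ)*(2*π)) = 1 := Real.cos_int_mul_two_pi m
    have s1 : Real.sin ((m:ℝ)*(2*π)) = 0 := by
      have := Real.sin_int_mul_pi (2*m)
      push_cast at this ⊢
      rw [show (m:ℝ)*(2*π) = 2*(m:ℝ)*π by ring]
      exact this
    rw [if_neg hm]
    simp only [mul_zero, Real.cos_zero, Real.sin_zero, c1, s1]
    field_simp
    ring

lemma key_cos (m : ℤ) :
    ∫ t in (0:ℝ)..(2*π), Real.cos (m * t) = if m = 0 then 2*π else 0 := by
  rcases eq_or_ne m 0 with rfl | hm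
  · simp
  · have hm' : (m:ℝ) ≠ 0 := Int.cast_ne_zero.2 hm
    have key : ∀ t : ℝ, HasDerivAt (fun t : ℝ => Real.sin ((m:ℝ)*t)/m) (Real.cos ((m:ℝ)*t)) t := by
      intro t
      have h1 : HasDerivAt (fun t : ℝ => (m:ℝ)*t) (m:ℝ) t := by
        simpa using (hasDerivAt_id t).const_mul (m:ℝ)
      have hsin : HasDerivAt (fun t : ℝ => Real.sin ((m:ℝ)*t)) (Real.cos ((m:ℝ)*t) * m) t :=
        (Real.hasDerivAt_sin _).comp t h1
      have := hsin.div_const (m:ℝ)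
      refine this.congr_deriv ?_
      field_simp
    rw [integral_eq_sub_of_hasDerivAt (fun t _ => key t)
      (Continuous.intervalIntegrable (by continuity) _ _)]
    have s1 : Real.sin ((m:ℝ)*(2*π)) = 0 := by
      have := Real.sin_int_mul_pi (2*m)
      push_cast at this ⊢
      rw [show (m:ℝ)*(2*π) = 2*(m:ℝ)*π by ring]
      exact this
    simp [s1, hm]

lemma harmonic_ge (k : ℕ) : Real.log (k+1) ≤ ∑ j ∈ Finset.range k, 1/((j:ℝ)+1) := by
  have tel : ∑ j ∈ Finset.range k, (Real.log ((j:ℝ)+2) - Real.log ((j:ℝ)+1)) = Real.log (k+1) := by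
    have := Finset.sum_range_sub (fun j => Real.log ((j:ℝ)+1)) k
    rw [show Real.log ((k:ℝ)+1) = Real.log (((k:ℕ):ℝ) + 1) - Real.log (((0:ℕ):ℝ)+1) by norm_num, ← this]
    apply Finset.sum_congr rfl
    intro j _
    push_cast
    ring_nf
  rw [← tel]
  apply Finset.sum_le_sum
  intro j _
  have h1 : (0:ℝ) < (j:ℝ)+1 := by positivity
  have h2 : (0:ℝ) < ((j:ℝ)+2)/((j:ℝ)+1) := by positivity
  have := Real.log_le_sub_one_of_pos h2
  rw [Real.log_div (by positivity) (by positivity)] at this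
  have : Real.log ((j:ℝ)+2) - Real.log ((j:ℝ)+1) ≤ ((j:ℝ)+2)/((j:ℝ)+1) - 1 := this
  refine this.trans ?_
  rw [div_sub_one h1.ne', div_le_div_iff₀ h1 h1]
  ring_nf
  norm_num

lemma sum_log_ge (n : ℕ) : (n:ℝ) * Real.log n - n ≤ ∑ k ∈ Finset.range n, Real.log ((k:ℝ)+1) := by
  induction n with
  | zero => simp
  | succ n ih =>
    rw [Finset.sum_range_succ]
    have key : ((n:ℝ)+1) * Real.log ((n:ℝ)+1) - ((n:ℝ)+1) ≤
        ((n:ℝ) * Real.log n - n) + Real.log ((n:ℝ)+1) := by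
      have h : (n:ℝ) * Real.log ((n:ℝ)+1) ≤ (n:ℝ) * Real.log n + 1 := by
        rcases Nat.eq_zero_or_pos n with rfl | hn
        · simp
        · have hn' : (0:ℝ) < n := by exact_mod_cast hn
          have h2 : (0:ℝ) < ((n:ℝ)+1)/n := by positivity
          have := Real.log_le_sub_one_of_pos h2
          rw [Real.log_div (by positivity) hn'.ne'] at this
          have h3 : Real.log ((n:ℝ)+1) - Real.log n ≤ 1/n := by
            refine this.trans ?_
            rw [div_sub_one hn'.ne']
            ring_nf
            try rfl
          calc (n:ℝ) * Real.log ((n:ℝ)+1) ≤ (n:ℝ) * (Real.log n + 1/n) := by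
                nlinarith [h3]
            _ = (n:ℝ) * Real.log n + 1 := by field_simp
      nlinarith [h]
    push_cast
    linarith [ih]

lemma inner_sum_eq (n k : ℕ) (hk : k ≤ n) :
    ∑ j ∈ Finset.range n, (if j < k then 1/((k:ℝ)-(j:ℝ)) else 0)
      = ∑ j ∈ Finset.range k, 1/((j:ℝ)+1) := by
  rw [← Finset.sum_filter]
  have hf : (Finset.range n).filter (· < k) = Finset.range k := by
    ext j; simp; omega
  rw [hf, ← Finset.sum_range_reflect (fun j => 1/((j:ℝ)+1)) k]
  apply Finset.sum_congr rfl
  intro j hj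
  simp only [Finset.mem_range] at hj
  congr 1
  have : ((k - 1 - j : ℕ) : ℝ) = (k:ℝ) - 1 - (j:ℝ) := by
    push_cast [Nat.cast_sub (by omega : j ≤ k - 1), Nat.cast_sub (by omega : 1 ≤ k)]
    ring
  rw [this]; ring

lemma margin_lemma {β ε P Q : ℝ} (hβ0 : 0 < β) (hβ1 : β ≤ 1) (hε : 0 < ε)
    (h : ε ≤ (max P 0) ^ β - (max Q 0) ^ β) :
    ε ^ ((1:ℝ)/β) ≤ P - Q := by
  set a := max P 0 with ha
  set b := max Q 0 with hb
  have ha0 : 0 ≤ a := le_max_right _ _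
  have hb0 : 0 ≤ b := le_max_right _ _
  -- subadditivity: a ^ β ≤ (a - b) ^ β + b ^ β  when b ≤ a
  have hba : b ≤ a := by
    by_contra hcon
    push_neg at hcon
    have : a ^ β ≤ b ^ β := Real.rpow_le_rpow ha0 hcon.le hβ0.le
    linarith
  have hsub : a ^ β ≤ (a - b) ^ β + b ^ β := by
    have := NNReal.rpow_add_le_add_rpow (a - b).toNNReal b.toNNReal hβ0.le hβ1
    have hab : (a-b).toNNReal + b.toNNReal = a.toNNReal := by
      ext
      push_cast [Real.coe_toNNReal _ (by linarith : (0:ℝ) ≤ a - b), Real.coe_toNNReal _ hb0,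
        Real.coe_toNNReal _ ha0]
      ring
    rw [hab] at this
    have := NNReal.coe_le_coe.2 this
    push_cast [NNReal.coe_rpow, Real.coe_toNNReal _ (by linarith : (0:ℝ) ≤ a - b),
      Real.coe_toNNReal _ hb0, Real.coe_toNNReal _ ha0] at this
    linarith
  have hεab : ε ≤ (a - b) ^ β := by linarith
  have h2 : ε ^ ((1:ℝ)/β) ≤ ((a-b) ^ β) ^ ((1:ℝ)/β) :=
    Real.rpow_le_rpow hε.le hεab (by positivity)
  have h3 : ((a-b) ^ β) ^ ((1:ℝ)/β) = a - b := by
    rw [← Real.rpow_mul (by linarith : (0:ℝ) ≤ a - b), mul_one_div, div_self hβ0.ne',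
      Real.rpow_one]
  rw [h3] at h2
  have hd : 0 < a - b := by
    rcases lt_or_eq_of_le hba with h' | h'
    · linarith
    · exfalso
      rw [← h', sub_self, Real.zero_rpow hβ0.ne'] at hεab
      linarith
  have haP : a = P := by
    rcases le_or_gt P 0 with hP | hP
    · exfalso
      rw [ha, max_eq_right hP] at hd
      simp at hd
      linarith
    · rw [ha, max_eq_left hP.le]
  have hbQ : Q ≤ b := le_max_left _ _
  linarith

variable {H : Type*} [NormedAddCommGroup H] [InnerProductSpace ℝ H]

variable {H : Type*} [NormedAddCommGroup H] [InnerProductSpace ℝ H]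

lemma parseval {n : ℕ} (z : Fin n → H) :
    ∫ t in (0:ℝ)..(2*π),
      (‖∑ j : Fin n, Real.cos ((j:ℝ)*t) • z j‖^2 + ‖∑ j : Fin n, Real.sin ((j:ℝ)*t) • z j‖^2)
      = 2*π*∑ j, ‖z j‖^2 := by
  have hpt : ∀ t : ℝ, ‖∑ j : Fin n, Real.cos ((j:ℝ)*t) • z j‖^2 + ‖∑ j : Fin n, Real.sin ((j:ℝ)*t) • z j‖^2
      = ∑ j, ∑ k, ⟪z j, z k⟫ * Real.cos (((j:ℝ)-(k:ℝ))*t) := by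
    intro t
    rw [← real_inner_self_eq_norm_sq, ← real_inner_self_eq_norm_sq, sum_inner, sum_inner,
      ← Finset.sum_add_distrib]
    refine Finset.sum_congr rfl fun j _ => ?_
    rw [inner_sum, inner_sum, ← Finset.sum_add_distrib]
    refine Finset.sum_congr rfl fun k _ => ?_
    rw [real_inner_smul_left, real_inner_smul_left, real_inner_smul_right, real_inner_smul_right,
      sub_mul, Real.cos_sub]
    ring
  rw [intervalIntegral.integral_congr (g := fun t => ∑ j, ∑ k : Fin n,
      ⟪z j, z k⟫ * Real.cos (((j:ℝ)-(k:ℝ))*t)) (fun t _ => hpt t)]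
  have hint1 : ∀ j k : Fin n, IntervalIntegrable
      (fun t => ⟪z j, z k⟫ * Real.cos (((j:ℝ)-(k:ℝ))*t)) MeasureTheory.volume 0 (2*π) :=
    fun j k => (Continuous.intervalIntegrable (continuous_const.mul
      (Real.continuous_cos.comp (continuous_const.mul continuous_id))) _ _)
  have hint2 : ∀ j : Fin n, IntervalIntegrable
      (fun t => ∑ k : Fin n, ⟪z j, z k⟫ * Real.cos (((j:ℝ)-(k:ℝ))*t))
      MeasureTheory.volume 0 (2*π) := by
    intro j
    have := IntervalIntegrable.sum (f := fun k t => ⟪z j, z k⟫ * Real.cos (((j:ℝ)-(k:ℝ))*t))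
      Finset.univ (fun k _ => hint1 j k)
    simpa only [Finset.sum_fn] using this
  rw [intervalIntegral.integral_finset_sum (fun j _ => hint2 j)]
  have h1 : ∀ j : Fin n, ∫ t in (0:ℝ)..(2*π), ∑ k : Fin n, ⟪z j, z k⟫ * Real.cos (((j:ℝ)-(k:ℝ))*t)
      = ∑ k : Fin n, ⟪z j, z k⟫ * (if ((j:ℤ) - (k:ℤ)) = 0 then 2*π else 0) := by
    intro j
    rw [intervalIntegral.integral_finset_sum (fun k _ => hint1 j k)]
    refine Finset.sum_congr rfl fun k _ => ?_
    rw [intervalIntegral.integral_const_mul]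
    congr 1
    rw [show ((j:ℝ)-(k:ℝ)) = (((j:ℤ)-(k:ℤ) : ℤ) : ℝ) by push_cast; ring]
    exact key_cos _
  rw [Finset.sum_congr rfl (fun j _ => h1 j)]
  have h2 : ∀ j : Fin n, ∑ k : Fin n, ⟪z j, z k⟫ * (if ((j:ℤ) - (k:ℤ)) = 0 then 2*π else 0)
      = ‖z j‖^2 * (2*π) := by
    intro j
    rw [Finset.sum_eq_single j]
    · simp [real_inner_self_eq_norm_sq]
    · intro k _ hk
      have : ¬ ((j:ℤ) - (k:ℤ) = 0) := by
        intro h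
        exact hk (by ext; omega)
      rw [if_neg this]
      ring
    · simp
  rw [Finset.sum_congr rfl (fun j _ => h2 j), ← Finset.sum_mul]
  ring

lemma hilbert_bound {n : ℕ} (x y : Fin n → H)
    (hx : ∀ i, ‖x i‖ ≤ 1) (hy : ∀ i, ‖y i‖ ≤ 1) (δ : ℝ) (hδ : 0 < δ)
    (hgap : ∀ j k : Fin n, j < k → δ ≤ ⟪x j, y k⟫ - ⟪x k, y j⟫) :
    δ * ((n:ℝ) * Real.log n - n) ≤ π * n := by
  classical
  set Xc : ℝ → H := fun t => ∑ j : Fin n, Real.cos ((j:ℝ)*t) • x j with hXc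
  set Xs : ℝ → H := fun t => ∑ j : Fin n, Real.sin ((j:ℝ)*t) • x j with hXs
  set Yc : ℝ → H := fun t => ∑ j : Fin n, Real.cos ((j:ℝ)*t) • y j with hYc
  set Ys : ℝ → H := fun t => ∑ j : Fin n, Real.sin ((j:ℝ)*t) • y j with hYs
  -- continuity
  have hcXc : Continuous Xc := continuous_finset_sum _ (fun j _ =>
    (Real.continuous_cos.comp (continuous_const.mul continuous_id)).smul continuous_const)
  have hcXs : Continuous Xs := continuous_finset_sum _ (fun j _ =>
    (Real.continuous_sin.comp (continuous_const.mul continuous_id)).smul continuous_const)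
  have hcYc : Continuous Yc := continuous_finset_sum _ (fun j _ =>
    (Real.continuous_cos.comp (continuous_const.mul continuous_id)).smul continuous_const)
  have hcYs : Continuous Ys := continuous_finset_sum _ (fun j _ =>
    (Real.continuous_sin.comp (continuous_const.mul continuous_id)).smul continuous_const)
  set F : ℝ → ℝ := fun t => ⟪Xc t, Ys t⟫ - ⟪Xs t, Yc t⟫ with hFdef
  have hcF : Continuous F := (hcXc.inner hcYs).sub (hcXs.inner hcYc)
  -- the expansion of F
  have hF : ∀ t : ℝ, F t = ∑ j : Fin n, ∑ k : Fin n,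
      ⟪x j, y k⟫ * Real.sin (((k:ℝ)-(j:ℝ))*t) := by
    intro t
    rw [hFdef]
    simp only [hXc, hXs, hYc, hYs]
    rw [sum_inner, sum_inner, ← Finset.sum_sub_distrib]
    refine Finset.sum_congr rfl fun j _ => ?_
    rw [inner_sum, inner_sum, ← Finset.sum_sub_distrib]
    refine Finset.sum_congr rfl fun k _ => ?_
    rw [real_inner_smul_left, real_inner_smul_left, real_inner_smul_right, real_inner_smul_right,
      sub_mul, Real.sin_sub]
    ring
  -- integral computation
  have hint1 : ∀ j k : Fin n, IntervalIntegrable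
      (fun t => ⟪x j, y k⟫ * ((π - t) * Real.sin (((k:ℝ)-(j:ℝ))*t)))
      MeasureTheory.volume 0 (2*π) :=
    fun j k => (Continuous.intervalIntegrable (continuous_const.mul
      ((continuous_const.sub continuous_id).mul
        (Real.continuous_sin.comp (continuous_const.mul continuous_id)))) _ _)
  have hint2 : ∀ j : Fin n, IntervalIntegrable
      (fun t => ∑ k : Fin n, ⟪x j, y k⟫ * ((π - t) * Real.sin (((k:ℝ)-(j:ℝ))*t)))
      MeasureTheory.volume 0 (2*π) := by
    intro j
    have := IntervalIntegrable.sum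
      (f := fun (k : Fin n) t => ⟪x j, y k⟫ * ((π - t) * Real.sin (((k:ℝ)-(j:ℝ))*t)))
      Finset.univ (fun k _ => hint1 j k)
    simpa only [Finset.sum_fn] using this
  have hS : ∫ t in (0:ℝ)..(2*π), (π - t) * F t
      = ∑ j : Fin n, ∑ k : Fin n, ⟪x j, y k⟫ *
          (if ((k:ℤ) - (j:ℤ)) = 0 then 0 else 2*π/(((k:ℤ)-(j:ℤ) : ℤ) : ℝ)) := by
    have heq : ∀ t : ℝ, (π - t) * F t = ∑ j : Fin n, ∑ k : Fin n,
        ⟪x j, y k⟫ * ((π - t) * Real.sin (((k:ℝ)-(j:ℝ))*t)) := by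
      intro t
      rw [hF t, Finset.mul_sum]
      refine Finset.sum_congr rfl fun j _ => ?_
      rw [Finset.mul_sum]
      refine Finset.sum_congr rfl fun k _ => ?_
      ring
    rw [intervalIntegral.integral_congr (g := fun t => ∑ j : Fin n, ∑ k : Fin n,
        ⟪x j, y k⟫ * ((π - t) * Real.sin (((k:ℝ)-(j:ℝ))*t))) (fun t _ => heq t)]
    rw [intervalIntegral.integral_finset_sum (fun j _ => hint2 j)]
    refine Finset.sum_congr rfl fun j _ => ?_
    rw [intervalIntegral.integral_finset_sum (fun k _ => hint1 j k)]
    refine Finset.sum_congr rfl fun k _ => ?_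
    rw [intervalIntegral.integral_const_mul]
    congr 1
    rw [show ((k:ℝ)-(j:ℝ)) = (((k:ℤ)-(j:ℤ) : ℤ) : ℝ) by push_cast; ring]
    exact key_int _
  -- upper bound for the integral
  have hup : ∫ t in (0:ℝ)..(2*π), (π - t) * F t ≤ 2*π^2*n := by
    have hmono : ∫ t in (0:ℝ)..(2*π), (π - t) * F t ≤
        ∫ t in (0:ℝ)..(2*π), (π/2) * ((‖Xc t‖^2 + ‖Xs t‖^2) + (‖Yc t‖^2 + ‖Ys t‖^2)) := by
      apply intervalIntegral.integral_mono_on (by positivity)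
      · exact Continuous.intervalIntegrable
          ((continuous_const.sub continuous_id).mul hcF) _ _
      · exact Continuous.intervalIntegrable (continuous_const.mul
          (((hcXc.norm.pow 2).add (hcXs.norm.pow 2)).add
            ((hcYc.norm.pow 2).add (hcYs.norm.pow 2)))) _ _
      · intro t ht
        simp only [Set.mem_Icc] at ht
        have habs : |π - t| ≤ π := by
          rw [abs_le]
          constructor <;> nlinarith [Real.pi_pos]
        have hF1 : |F t| ≤ ‖Xc t‖*‖Ys t‖ + ‖Xs t‖*‖Yc t‖ := by
          refine (abs_sub _ _).trans ?_
          exact add_le_add (abs_real_inner_le_norm _ _) (abs_real_inner_le_norm _ _)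
        have hF2 : |F t| ≤ ((‖Xc t‖^2 + ‖Xs t‖^2) + (‖Yc t‖^2 + ‖Ys t‖^2))/2 := by
          nlinarith [sq_nonneg (‖Xc t‖ - ‖Ys t‖), sq_nonneg (‖Xs t‖ - ‖Yc t‖)]
        calc (π - t) * F t ≤ |(π - t) * F t| := le_abs_self _
          _ = |π - t| * |F t| := abs_mul _ _
          _ ≤ π * (((‖Xc t‖^2 + ‖Xs t‖^2) + (‖Yc t‖^2 + ‖Ys t‖^2))/2) := by
              apply mul_le_mul habs hF2 (abs_nonneg _) Real.pi_pos.le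
          _ = (π/2) * ((‖Xc t‖^2 + ‖Xs t‖^2) + (‖Yc t‖^2 + ‖Ys t‖^2)) := by ring
    refine hmono.trans ?_
    rw [intervalIntegral.integral_const_mul]
    rw [intervalIntegral.integral_add (f := fun t => ‖Xc t‖^2 + ‖Xs t‖^2)
      (g := fun t => ‖Yc t‖^2 + ‖Ys t‖^2)
      (Continuous.intervalIntegrable ((hcXc.norm.pow 2).add (hcXs.norm.pow 2)) _ _)
      (Continuous.intervalIntegrable ((hcYc.norm.pow 2).add (hcYs.norm.pow 2)) _ _)]
    rw [parseval x, parseval y]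
    have hxs : ∑ j, ‖x j‖^2 ≤ (n:ℝ) := by
      calc ∑ j, ‖x j‖^2 ≤ ∑ _j : Fin n, (1:ℝ) :=
            Finset.sum_le_sum (fun j _ => by nlinarith [hx j, norm_nonneg (x j)])
        _ = n := by simp
    have hys : ∑ j, ‖y j‖^2 ≤ (n:ℝ) := by
      calc ∑ j, ‖y j‖^2 ≤ ∑ _j : Fin n, (1:ℝ) :=
            Finset.sum_le_sum (fun j _ => by nlinarith [hy j, norm_nonneg (y j)])
        _ = n := by simp
    nlinarith [Real.pi_pos]
  -- lower bound for the sum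
  have hlow : 2*π*δ*((n:ℝ) * Real.log n - n) ≤
      ∑ j : Fin n, ∑ k : Fin n, ⟪x j, y k⟫ *
          (if ((k:ℤ) - (j:ℤ)) = 0 then 0 else 2*π/(((k:ℤ)-(j:ℤ) : ℤ) : ℝ)) := by
    classical
    set u : Fin n → Fin n → ℝ := fun j k =>
      if (j:ℕ) < (k:ℕ) then ⟪x j, y k⟫ * (2*π/((k:ℝ)-(j:ℝ))) else 0 with hu
    set v : Fin n → Fin n → ℝ := fun j k =>
      if (k:ℕ) < (j:ℕ) then -(⟪x j, y k⟫ * (2*π/((j:ℝ)-(k:ℝ)))) else 0 with hv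
    have hsplit : ∀ j k : Fin n, ⟪x j, y k⟫ *
        (if ((k:ℤ) - (j:ℤ)) = 0 then 0 else 2*π/(((k:ℤ)-(j:ℤ) : ℤ) : ℝ)) = u j k + v j k := by
      intro j k
      rcases Nat.lt_trichotomy (j:ℕ) (k:ℕ) with hlt | heq | hgt
      · rw [hu, hv]
        simp only [if_pos hlt, if_neg (by omega : ¬ (k:ℕ) < (j:ℕ)),
          if_neg (by omega : ¬ ((k:ℤ) - (j:ℤ)) = 0), add_zero]
        congr 2
        push_cast
        ring
      · rw [hu, hv]
        simp only [if_pos (by omega : ((k:ℤ) - (j:ℤ)) = 0),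
          if_neg (by omega : ¬ (j:ℕ) < (k:ℕ)), if_neg (by omega : ¬ (k:ℕ) < (j:ℕ))]
        ring
      · rw [hu, hv]
        simp only [if_pos hgt, if_neg (by omega : ¬ (j:ℕ) < (k:ℕ)),
          if_neg (by omega : ¬ ((k:ℤ) - (j:ℤ)) = 0), zero_add]
        have hcast : (((k:ℤ)-(j:ℤ) : ℤ) : ℝ) = -((j:ℝ) - (k:ℝ)) := by push_cast; ring
        rw [hcast, div_neg]
        ring
    have hstep1 : ∑ j : Fin n, ∑ k : Fin n, ⟪x j, y k⟫ *
        (if ((k:ℤ) - (j:ℤ)) = 0 then 0 else 2*π/(((k:ℤ)-(j:ℤ) : ℤ) : ℝ))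
        = ∑ j : Fin n, ∑ k : Fin n, (u j k + v k j) := by
      rw [Finset.sum_congr rfl (fun j _ => Finset.sum_congr rfl (fun k _ => hsplit j k))]
      rw [show (∑ j : Fin n, ∑ k : Fin n, (u j k + v j k))
          = (∑ j : Fin n, ∑ k : Fin n, u j k) + (∑ j : Fin n, ∑ k : Fin n, v j k) by
        rw [← Finset.sum_add_distrib]
        exact Finset.sum_congr rfl (fun j _ => Finset.sum_add_distrib)]
      rw [show (∑ j : Fin n, ∑ k : Fin n, (u j k + v k j))
          = (∑ j : Fin n, ∑ k : Fin n, u j k) + (∑ j : Fin n, ∑ k : Fin n, v k j) by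
        rw [← Finset.sum_add_distrib]
        exact Finset.sum_congr rfl (fun j _ => Finset.sum_add_distrib)]
      congr 1
      exact Finset.sum_comm
    rw [hstep1]
    have hterm : ∀ j k : Fin n, (if (j:ℕ) < (k:ℕ) then δ * (2*π/((k:ℝ)-(j:ℝ))) else 0)
        ≤ u j k + v k j := by
      intro j k
      by_cases hlt : (j:ℕ) < (k:ℕ)
      · rw [hu, hv]
        simp only [if_pos hlt]
        have hjk : (j:ℝ) < (k:ℝ) := by exact_mod_cast hlt
        have hpos : 0 < 2*π/((k:ℝ)-(j:ℝ)) := by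
          apply div_pos (by positivity) (by linarith)
        have hg := hgap j k (Fin.lt_def.mpr hlt)
        calc δ * (2*π/((k:ℝ)-(j:ℝ))) ≤ (⟪x j, y k⟫ - ⟪x k, y j⟫) * (2*π/((k:ℝ)-(j:ℝ))) :=
              mul_le_mul_of_nonneg_right hg hpos.le
          _ = ⟪x j, y k⟫ * (2*π/((k:ℝ)-(j:ℝ))) + -(⟪x k, y j⟫ * (2*π/((k:ℝ)-(j:ℝ)))) := by ring
      · rw [hu, hv]
        simp [hlt]
    have hsum1 : ∑ j : Fin n, ∑ k : Fin n, (if (j:ℕ) < (k:ℕ) then δ * (2*π/((k:ℝ)-(j:ℝ))) else 0)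
        ≤ ∑ j : Fin n, ∑ k : Fin n, (u j k + v k j) :=
      Finset.sum_le_sum (fun j _ => Finset.sum_le_sum (fun k _ => hterm j k))
    refine le_trans ?_ hsum1
    -- rewrite as 2πδ * Σ₂
    have hfact : ∀ j k : Fin n, (if (j:ℕ) < (k:ℕ) then δ * (2*π/((k:ℝ)-(j:ℝ))) else 0)
        = (2*π*δ) * (if (j:ℕ) < (k:ℕ) then 1/((k:ℝ)-(j:ℝ)) else 0) := by
      intro j k
      split_ifs <;> ring
    rw [Finset.sum_congr rfl (fun j _ => Finset.sum_congr rfl (fun k _ => hfact j k))]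
    have : ∑ j : Fin n, ∑ k : Fin n, (2*π*δ) * (if (j:ℕ) < (k:ℕ) then 1/((k:ℝ)-(j:ℝ)) else 0)
        = (2*π*δ) * ∑ j : Fin n, ∑ k : Fin n, (if (j:ℕ) < (k:ℕ) then 1/((k:ℝ)-(j:ℝ)) else 0) := by
      rw [Finset.mul_sum]
      exact Finset.sum_congr rfl (fun j _ => (Finset.mul_sum _ _ _).symm)
    rw [this]
    apply mul_le_mul_of_nonneg_left _ (by positivity)
    -- Σ₂ ≥ n log n - n
    have hswap : ∑ j : Fin n, ∑ k : Fin n, (if (j:ℕ) < (k:ℕ) then 1/((k:ℝ)-(j:ℝ)) else 0)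
        = ∑ k : Fin n, ∑ j : Fin n, (if (j:ℕ) < (k:ℕ) then 1/((k:ℝ)-(j:ℝ)) else 0) :=
      Finset.sum_comm
    rw [hswap]
    have hinner : ∀ k : Fin n, ∑ j : Fin n, (if (j:ℕ) < (k:ℕ) then 1/((k:ℝ)-(j:ℝ)) else 0)
        = ∑ j ∈ Finset.range ((k:ℕ)), 1/((j:ℝ)+1) := by
      intro k
      rw [Fin.sum_univ_eq_sum_range (fun j => if j < (k:ℕ) then 1/(((k:ℕ):ℝ)-(j:ℝ)) else 0) n]
      exact inner_sum_eq n k k.isLt.le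
    rw [Finset.sum_congr rfl (fun k _ => hinner k)]
    have hlog : ∑ k : Fin n, Real.log ((k:ℕ)+1)
        ≤ ∑ k : Fin n, ∑ j ∈ Finset.range ((k:ℕ)), 1/((j:ℝ)+1) :=
      Finset.sum_le_sum (fun k _ => by
        have := harmonic_ge (k:ℕ)
        push_cast at this ⊢
        exact this)
    refine le_trans ?_ hlog
    rw [Fin.sum_univ_eq_sum_range (fun k => Real.log ((k:ℝ)+1)) n]
    exact sum_log_ge n

  have h2 : 2*π*(δ*((n:ℝ) * Real.log n - n)) ≤ 2*π*(π*n) := by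
    calc 2*π*(δ*((n:ℝ) * Real.log n - n)) = 2*π*δ*((n:ℝ) * Real.log n - n) := by ring
      _ ≤ ∑ j : Fin n, ∑ k : Fin n, ⟪x j, y k⟫ *
          (if ((k:ℤ) - (j:ℤ)) = 0 then 0 else 2*π/(((k:ℤ)-(j:ℤ) : ℤ) : ℝ)) := hlow
      _ = ∫ t in (0:ℝ)..(2*π), (π - t) * F t := hS.symm
      _ ≤ 2*π^2*n := hup
      _ = 2*π*(π*n) := by ring
  exact le_of_mul_le_mul_left h2 (by positivity)

end FracPowAux

open RealInnerProductSpace Real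

/-- Upper bound for fractional power connectives `(⟪x,y⟫₊)^β`, `β ∈ (0,1]`. -/
theorem fractional_power_upper_bound
    {H : Type*} [NormedAddCommGroup H] [InnerProductSpace ℝ H]
    (β : ℝ) (hβ : β ∈ Set.Ioc (0 : ℝ) 1)
    (ε : ℝ) (hε : ε ∈ Set.Ioo (0 : ℝ) 1) (n : ℕ)
    (x y : Fin n → H)
    (hx : ∀ i, ‖x i‖ ≤ 1) (hy : ∀ i, ‖y i‖ ≤ 1)
    (hhg : ∀ i j : Fin n, i < j →
        ε ≤ (max ⟪x i, y j⟫ 0) ^ β - (max ⟪x j, y i⟫ 0) ^ β) :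
    Real.log n ≤ π * ε ^ (-(1 / β)) + 1 := by
  obtain ⟨hβ0, hβ1⟩ := hβ
  obtain ⟨hε0, hε1⟩ := hε
  set δ := ε ^ ((1:ℝ)/β) with hδdef
  have hδ : 0 < δ := Real.rpow_pos_of_pos hε0 _
  have hgap : ∀ j k : Fin n, j < k → δ ≤ ⟪x j, y k⟫ - ⟪x k, y j⟫ := fun j k h =>
    margin_lemma hβ0 hβ1 hε0 (hhg j k h)
  have hmain := hilbert_bound x y hx hy δ hδ hgap
  have hinv : ε ^ (-(1/β)) = δ⁻¹ := by
    rw [hδdef, ← Real.rpow_neg hε0.le]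
  rcases Nat.eq_zero_or_pos n with rfl | hn
  · have h1 : 0 < ε ^ (-(1/β)) := Real.rpow_pos_of_pos hε0 _
    have h2 : Real.log ((0:ℕ):ℝ) = 0 := by norm_num
    rw [h2]
    nlinarith [Real.pi_pos]
  · have hn' : (0:ℝ) < n := by exact_mod_cast hn
    have h1 : δ * (Real.log n - 1) ≤ π := by
      have h2 : (δ * (Real.log n - 1)) * n ≤ π * n := by nlinarith [hmain]
      exact le_of_mul_le_mul_right h2 hn'
    have h3 : Real.log n - 1 ≤ π / δ := by
      rw [le_div_iff₀ hδ]
      linarith [h1]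
    rw [hinv]
    rw [div_eq_mul_inv] at h3
    linarith
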